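/- arXiv:1602.03899 — 2 statements merged into one kernel-verified Lean document; each statement's English description precedes it below -/
import Mathlib

section
/- Let G be a graph with n ≥ 1 vertices and let M = M[IAS(G)]. Then the following are equivalent: (i) M is 2-connected, i.e. τ(M) ≥ 2; (ii) M is cyclically 2-connected, i.e. κ*(M) ≥ 2; (iii) M is vertically 2-connected, i.e. κ(M) ≥ 2; (iv) G is connected and n > 1. -/
open scoped ENat

variable {V : Type*} [Fintype V] [DecidableEq V]

/-- The column of the matrix `IAS(G) = (I | A | A+I)` indexed by `(v, i)`:
`i = 0` gives `φ(v)` (identity column), `i = 1` gives `χ(v)` (column of `A`),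
`i = 2` gives `ψ(v)` (column of `A + I`). -/
def iasCol (A : Matrix V V (ZMod 2)) : V × Fin 3 → V → ZMod 2 :=
  fun p w =>
    if p.2 = 0 then (if w = p.1 then 1 else 0)
    else if p.2 = 1 then A w p.1
    else A w p.1 + (if w = p.1 then 1 else 0)

/-- The rank of a subset of the ground set `W(G) = V × Fin 3` of the isotropic
matroid: the GF(2)-rank of the corresponding set of columns. -/
noncomputable def iasRank (A : Matrix V V (ZMod 2)) (S : Set (V × Fin 3)) : ℕ :=
  Module.finrank (ZMod 2) (Submodule.span (ZMod 2) (iasCol A '' S))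

/-- The connectivity function `λ(S) = r(S) + r(W - S) - r(M)`. -/
noncomputable def iasLambda (A : Matrix V V (ZMod 2)) (S : Set (V × Fin 3)) : ℕ :=
  iasRank A S + iasRank A Sᶜ - iasRank A Set.univ

/-- Independence in the isotropic matroid. -/
def iasIndep (A : Matrix V V (ZMod 2)) (S : Set (V × Fin 3)) : Prop :=
  LinearIndependent (ZMod 2) (fun s : S => iasCol A s.1)

/-- Circuits of the isotropic matroid: minimal dependent sets. -/
def iasCircuit (A : Matrix V V (ZMod 2)) (C : Set (V × Fin 3)) : Prop :=
  ¬ iasIndep A C ∧ ∀ S ⊂ C, iasIndep A S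

/-- An ordinary `k`-separation: `λ(S) < k` and `|S|, |W - S| ≥ k`. -/
def OrdinarySep (A : Matrix V V (ZMod 2)) (k : ℕ) (S : Set (V × Fin 3)) : Prop :=
  0 < k ∧ iasLambda A S < k ∧ k ≤ S.ncard ∧ k ≤ Sᶜ.ncard

/-- A cyclic `k`-separation: `λ(S) < k` and both `S` and `W - S` are dependent. -/
def CyclicSep (A : Matrix V V (ZMod 2)) (k : ℕ) (S : Set (V × Fin 3)) : Prop :=
  0 < k ∧ iasLambda A S < k ∧ ¬ iasIndep A S ∧ ¬ iasIndep A Sᶜ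

/-- A vertical `k`-separation: `λ(S) < k` and `r(S), r(W - S) ≥ k`. -/
def VerticalSep (A : Matrix V V (ZMod 2)) (k : ℕ) (S : Set (V × Fin 3)) : Prop :=
  0 < k ∧ iasLambda A S < k ∧ k ≤ iasRank A S ∧ k ≤ iasRank A Sᶜ

/-- `τ(M) = min {k : M has an ordinary k-separation}`, with `min ∅ = ∞`. -/
noncomputable def iasTau (A : Matrix V V (ZMod 2)) : ℕ∞ :=
  sInf {k : ℕ∞ | ∃ m : ℕ, (m : ℕ∞) = k ∧ ∃ S, OrdinarySep A m S}

/-- `κ*(M) = min ({k : M has a cyclic k-separation} ∪ {|W| - r(M)})`. -/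
noncomputable def iasKappaStar (A : Matrix V V (ZMod 2)) : ℕ :=
  sInf ({k : ℕ | ∃ S, CyclicSep A k S} ∪ {3 * Fintype.card V - iasRank A Set.univ})

/-- `κ(M) = min ({k : M has a vertical k-separation} ∪ {r(M)})`. -/
noncomputable def iasKappa (A : Matrix V V (ZMod 2)) : ℕ :=
  sInf ({k : ℕ | ∃ S, VerticalSep A k S} ∪ {iasRank A Set.univ})

/-- The simple graph underlying a looped simple graph given by its adjacency matrix. -/
def toSimpleGraph (A : Matrix V V (ZMod 2)) : SimpleGraph V where
  Adj v w := v ≠ w ∧ A v w = 1 ∧ A w v = 1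
  symm := ⟨fun v w ⟨h1, h2, h3⟩ => ⟨Ne.symm h1, h3, h2⟩⟩
  loopless := ⟨fun v h => h.1 rfl⟩

/-- The open neighborhood `N_G(v)`. -/
def nbhd (A : Matrix V V (ZMod 2)) (v : V) : Set V := {u | u ≠ v ∧ A v u = 1}

/-- `v` is a pendant vertex: `N_G(v) = {w}` for some `w`. -/
def IsPendant (A : Matrix V V (ZMod 2)) (v : V) : Prop := ∃ w, nbhd A v = {w}

/-- `G` has a pair of twin vertices: `v ≠ w` with `N_G(v) - {w} = N_G(w) - {v}`. -/
def HasTwins (A : Matrix V V (ZMod 2)) : Prop :=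
  ∃ v w, v ≠ w ∧ nbhd A v \ {w} = nbhd A w \ {v}

/-- The cut-rank `c_G(X)`: the GF(2)-rank of the submatrix `A[V - X, X]`
(columns indexed by `X`, rows indexed by `V - X`). -/
noncomputable def cutRank (A : Matrix V V (ZMod 2)) (X : Set V) : ℕ :=
  Module.finrank (ZMod 2)
    (Submodule.span (ZMod 2) ((fun x : V => fun w : ↥(Xᶜ) => A w.1 x) '' X))

/-- `τ_G(X) = ⋃_{x ∈ X} τ_G(x)`, the union of the vertex triples of members of `X`. -/
def tauSet (X : Set V) : Set (V × Fin 3) := {p | p.1 ∈ X}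

/-- Loop complementation at `v`. -/
def loopComp (A : Matrix V V (ZMod 2)) (v : V) : Matrix V V (ZMod 2) :=
  fun x y => A x y + if x = v ∧ y = v then 1 else 0

/-- Simple local complementation at `v`. -/
def simpleLocalComp (A : Matrix V V (ZMod 2)) (v : V) : Matrix V V (ZMod 2) :=
  fun x y => A x y +
    if x ≠ y ∧ (x ≠ v ∧ A v x = 1) ∧ (y ≠ v ∧ A v y = 1) then 1 else 0

/-- Non-simple local complementation at `v`. -/
def nonSimpleLocalComp (A : Matrix V V (ZMod 2)) (v : V) : Matrix V V (ZMod 2) :=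
  fun x y => simpleLocalComp A v x y + if x = y ∧ x ≠ v ∧ A v x = 1 then 1 else 0

/-- One local move. -/
def LocalStep (A B : Matrix V V (ZMod 2)) : Prop :=
  ∃ v, B = loopComp A v ∨ B = simpleLocalComp A v ∨ B = nonSimpleLocalComp A v

/-- Local equivalence: a finite sequence of loop complementations and
(simple or non-simple) local complementations. -/
def LocallyEquiv (A B : Matrix V V (ZMod 2)) : Prop :=
  Relation.ReflTransGen LocalStep A B

/-- `G` has a split: a bipartition `(V₁, V₂)` of `V` with `|V₁|, |V₂| ≥ 2` such that the
GF(2)-rank of `A[V₁, V₂]` is at most 1. -/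
def HasSplit (A : Matrix V V (ZMod 2)) : Prop :=
  ∃ X : Set V, 2 ≤ X.ncard ∧ 2 ≤ Xᶜ.ncard ∧ cutRank A X ≤ 1

/-- A transverse circuit: a circuit of the isotropic matroid meeting each
vertex triple at most once. -/
def IsTransverseCircuit (A : Matrix V V (ZMod 2)) (C : Set (V × Fin 3)) : Prop :=
  iasCircuit A C ∧ ∀ p ∈ C, ∀ q ∈ C, p.1 = q.1 → p = q

/-- An isotropic `k`-separation of `G`: `|X|, |V - X| ≥ k` and `c_G(X) < k`. -/
def IsotropicSep (A : Matrix V V (ZMod 2)) (k : ℕ) (X : Set V) : Prop :=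
  k ≤ X.ncard ∧ k ≤ Xᶜ.ncard ∧ cutRank A X < k

/-- The isotropic connectivity `κ_B(G)`, with `min ∅ = ∞`. -/
noncomputable def kappaB (A : Matrix V V (ZMod 2)) : ℕ∞ :=
  sInf {j : ℕ∞ | ∃ k : ℕ, (k : ℕ∞) = j ∧ ∃ X, IsotropicSep A k X}

/-- The 5-cycle `C₅`. -/
def C5mat : Matrix (Fin 5) (Fin 5) (ZMod 2) :=
  fun i j => if (i.val + 1) % 5 = j.val ∨ (j.val + 1) % 5 = i.val then 1 else 0

/-- The wheel `W₅` : a 5-cycle on `{0,…,4}` plus a hub `5` adjacent to all. -/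
def W5mat : Matrix (Fin 6) (Fin 6) (ZMod 2) :=
  fun i j =>
    if (i.val = 5 ∧ j.val ≠ 5) ∨ (j.val = 5 ∧ i.val ≠ 5) then 1
    else if i.val ≠ 5 ∧ j.val ≠ 5 ∧ ((i.val + 1) % 5 = j.val ∨ (j.val + 1) % 5 = i.val) then 1
    else 0

set_option linter.unusedSectionVars false
set_option maxHeartbeats 1000000

section AuxIAS

variable {A : Matrix V V (ZMod 2)}

private lemma zmod2_cases (x : ZMod 2) : x = 0 ∨ x = 1 := by revert x; decide

lemma triple_sum (A : Matrix V V (ZMod 2)) (v : V) :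
    iasCol A (v,0) + iasCol A (v,1) + iasCol A (v,2) = 0 := by
  funext w
  show ((if w = v then (1:ZMod 2) else 0) + A w v) + (A w v + if w = v then 1 else 0) = 0
  generalize (if w = v then (1:ZMod 2) else 0) = a
  generalize A w v = b
  revert a b; decide

lemma col_zero_eq (A : Matrix V V (ZMod 2)) (v : V) :
    iasCol A (v,0) = iasCol A (v,1) + iasCol A (v,2) := by
  funext w
  show (if w = v then (1:ZMod 2) else 0) = A w v + (A w v + if w = v then 1 else 0)
  generalize (if w = v then (1:ZMod 2) else 0) = a
  generalize A w v = b
  revert a b; decide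

lemma col_one_eq (A : Matrix V V (ZMod 2)) (v : V) :
    iasCol A (v,1) = iasCol A (v,0) + iasCol A (v,2) := by
  funext w
  show A w v = (if w = v then (1:ZMod 2) else 0) + (A w v + if w = v then 1 else 0)
  generalize (if w = v then (1:ZMod 2) else 0) = a
  generalize A w v = b
  revert a b; decide

lemma col_two_eq (A : Matrix V V (ZMod 2)) (v : V) :
    iasCol A (v,2) = iasCol A (v,0) + iasCol A (v,1) := by
  funext w
  show A w v + (if w = v then (1:ZMod 2) else 0)
      = (if w = v then (1:ZMod 2) else 0) + A w v
  exact add_comm _ _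

/-- membership in a span from support control -/
lemma mem_span_of_supp (A : Matrix V V (ZMod 2)) {T : Set (V × Fin 3)} {Y : Set V}
    (f : V → ZMod 2) (hs : ∀ w, w ∉ Y → f w = 0) (hT : ∀ w ∈ Y, ((w, 0) : V × Fin 3) ∈ T) :
    f ∈ Submodule.span (ZMod 2) (iasCol A '' T) := by
  rw [pi_eq_sum_univ f]
  apply Submodule.sum_mem
  intro w _
  by_cases hw : w ∈ Y
  · refine Submodule.smul_mem _ _ (Submodule.subset_span ⟨(w,0), hT w hw, ?_⟩)
    funext x
    show (if x = w then (1:ZMod 2) else 0) = if w = x then 1 else 0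
    simp [eq_comm]
  · simp [hs w hw]

lemma span_univ_eq_top (A : Matrix V V (ZMod 2)) :
    Submodule.span (ZMod 2) (iasCol A '' (Set.univ : Set (V × Fin 3))) = ⊤ := by
  rw [eq_top_iff]
  intro f _
  exact mem_span_of_supp A f (fun w hw => absurd (Set.mem_univ w) hw)
    (fun w _ => Set.mem_univ _)

lemma rank_univ (A : Matrix V V (ZMod 2)) :
    iasRank A Set.univ = Fintype.card V := by
  unfold iasRank
  rw [span_univ_eq_top A, finrank_top, Module.finrank_fintype_fun_eq_card]

lemma rank_add_rank (A : Matrix V V (ZMod 2)) (S : Set (V × Fin 3)) :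
    iasRank A S + iasRank A Sᶜ = Fintype.card V +
      Module.finrank (ZMod 2)
        ↥(Submodule.span (ZMod 2) (iasCol A '' S) ⊓ Submodule.span (ZMod 2) (iasCol A '' Sᶜ)) := by
  have h := Submodule.finrank_sup_add_finrank_inf_eq
    (Submodule.span (ZMod 2) (iasCol A '' S)) (Submodule.span (ZMod 2) (iasCol A '' Sᶜ))
  have hsup : Submodule.span (ZMod 2) (iasCol A '' S) ⊔ Submodule.span (ZMod 2) (iasCol A '' Sᶜ)
      = ⊤ := by
    rw [← Submodule.span_union, ← Set.image_union, Set.union_compl_self]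
    exact span_univ_eq_top A
  rw [hsup, finrank_top, Module.finrank_fintype_fun_eq_card] at h
  exact h.symm

lemma lambda_eq (A : Matrix V V (ZMod 2)) (S : Set (V × Fin 3)) :
    iasLambda A S = Module.finrank (ZMod 2)
      ↥(Submodule.span (ZMod 2) (iasCol A '' S) ⊓ Submodule.span (ZMod 2) (iasCol A '' Sᶜ)) := by
  unfold iasLambda
  rw [rank_univ, rank_add_rank A S, Nat.add_sub_cancel_left]

lemma lambda_zero_iff (A : Matrix V V (ZMod 2)) (S : Set (V × Fin 3)) :
    iasLambda A S = 0 ↔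
      Submodule.span (ZMod 2) (iasCol A '' S) ⊓ Submodule.span (ZMod 2) (iasCol A '' Sᶜ) = ⊥ := by
  rw [lambda_eq, Submodule.finrank_eq_zero]

lemma dep_of_triple (A : Matrix V V (ZMod 2)) {S : Set (V × Fin 3)} {v : V}
    (h0 : ((v,0) : V × Fin 3) ∈ S) (h1 : ((v,1) : V × Fin 3) ∈ S)
    (h2 : ((v,2) : V × Fin 3) ∈ S) : ¬ iasIndep A S := by
  rw [iasIndep, not_linearIndependent_iff]
  refine ⟨{⟨(v,0),h0⟩, ⟨(v,1),h1⟩, ⟨(v,2),h2⟩}, fun _ => 1, ?_, ⟨(v,0),h0⟩, by simp, one_ne_zero⟩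
  rw [Finset.sum_insert (by simp), Finset.sum_insert (by simp), Finset.sum_singleton]
  simpa [← add_assoc] using triple_sum A v

lemma indep_empty (A : Matrix V V (ZMod 2)) : iasIndep A (∅ : Set (V × Fin 3)) := by
  rw [iasIndep]
  exact linearIndependent_empty_type

lemma rank_empty (A : Matrix V V (ZMod 2)) : iasRank A (∅ : Set (V × Fin 3)) = 0 := by
  unfold iasRank
  rw [Set.image_empty, Submodule.span_empty, finrank_bot]

end AuxIAS

section AuxGraph

lemma exists_nbr {A : Matrix V V (ZMod 2)} (hc : (toSimpleGraph A).Connected)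
    (h2 : 1 < Fintype.card V) (v : V) : ∃ u, u ≠ v ∧ A v u = 1 ∧ A u v = 1 := by
  obtain ⟨w, hw⟩ := Fintype.exists_ne_of_one_lt_card h2 v
  obtain ⟨p⟩ := hc.preconnected v w
  cases p with
  | nil => exact absurd rfl hw
  | cons h q => exact ⟨_, Ne.symm h.1, h.2.1, h.2.2⟩

lemma cols_ne_zero {A : Matrix V V (ZMod 2)} (hA : A.IsSymm)
    (hc : (toSimpleGraph A).Connected) (h2 : 1 < Fintype.card V) (p : V × Fin 3) :
    iasCol A p ≠ 0 := by
  obtain ⟨v, i⟩ := p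
  obtain ⟨u, hu, hvu, huv⟩ := exists_nbr hc h2 v
  intro h
  fin_cases i
  · have := congrFun h v
    simp [iasCol] at this
  · have := congrFun h u
    simp [iasCol, huv] at this
  · have := congrFun h u
    simp [iasCol, hu, huv] at this

lemma col0_ne_zero (A : Matrix V V (ZMod 2)) (v : V) : iasCol A (v, 0) ≠ 0 := by
  intro h
  have := congrFun h v
  simp [iasCol] at this

lemma walk_cross {G : SimpleGraph V} {X : Set V} :
    ∀ {v w : V}, G.Walk v w → v ∈ X → w ∉ X → ∃ x ∈ X, ∃ y, y ∉ X ∧ G.Adj x y := by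
  intro v w p
  induction p with
  | nil => intro h1 h2; exact absurd h1 h2
  | @cons a b c hadj q ih =>
    intro h1 h2
    by_cases hb : b ∈ X
    · exact ih hb h2
    · exact ⟨a, h1, b, hb, hadj⟩

lemma tauSet_compl (X : Set V) : (tauSet X)ᶜ = tauSet Xᶜ := rfl

/-- The submodule of functions supported inside `X`. -/
def suppSub (X : Set V) : Submodule (ZMod 2) (V → ZMod 2) where
  carrier := {f | ∀ w ∉ X, f w = 0}
  add_mem' := fun hf hg w hw => by simp [hf w hw, hg w hw]
  zero_mem' := fun w hw => rfl
  smul_mem' := fun c f hf w hw => by simp [hf w hw]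

lemma suppSub_inf (X : Set V) : suppSub (V := V) X ⊓ suppSub Xᶜ = ⊥ := by
  rw [eq_bot_iff]
  intro f hf
  have h1 := hf.1
  have h2 := hf.2
  rw [Submodule.mem_bot]
  funext w
  by_cases hw : w ∈ X
  · exact h2 w (by simpa using hw)
  · exact h1 w hw

end AuxGraph

section Core

variable {A : Matrix V V (ZMod 2)} {S : Set (V × Fin 3)}

private lemma key_split
    (hinf : Submodule.span (ZMod 2) (iasCol A '' S) ⊓ Submodule.span (ZMod 2) (iasCol A '' Sᶜ) = ⊥)
    (hnz : ∀ p : V × Fin 3, iasCol A p ≠ 0) {v : V} {i j k : Fin 3}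
    (e1 : iasCol A (v,j) = iasCol A (v,i) + iasCol A (v,k))
    (e2 : iasCol A (v,i) = iasCol A (v,j) + iasCol A (v,k))
    (hi : (v,i) ∈ S) (hj : (v,j) ∉ S) : False := by
  by_cases hk : (v,k) ∈ S
  · have h1 : iasCol A (v,j) ∈ Submodule.span (ZMod 2) (iasCol A '' S) := by
      rw [e1]
      exact add_mem (Submodule.subset_span ⟨_, hi, rfl⟩) (Submodule.subset_span ⟨_, hk, rfl⟩)
    have h2 : iasCol A (v,j) ∈ Submodule.span (ZMod 2) (iasCol A '' Sᶜ) :=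
      Submodule.subset_span ⟨_, hj, rfl⟩
    exact hnz (v,j) ((Submodule.mem_bot _).mp (hinf ▸ Submodule.mem_inf.mpr ⟨h1, h2⟩))
  · have h1 : iasCol A (v,i) ∈ Submodule.span (ZMod 2) (iasCol A '' Sᶜ) := by
      rw [e2]
      exact add_mem (Submodule.subset_span ⟨_, hj, rfl⟩) (Submodule.subset_span ⟨_, hk, rfl⟩)
    have h2 : iasCol A (v,i) ∈ Submodule.span (ZMod 2) (iasCol A '' S) :=
      Submodule.subset_span ⟨_, hi, rfl⟩
    exact hnz (v,i) ((Submodule.mem_bot _).mp (hinf ▸ Submodule.mem_inf.mpr ⟨h2, h1⟩))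

private lemma unsplit
    (hinf : Submodule.span (ZMod 2) (iasCol A '' S) ⊓ Submodule.span (ZMod 2) (iasCol A '' Sᶜ) = ⊥)
    (hnz : ∀ p : V × Fin 3, iasCol A p ≠ 0) {v : V} {i j : Fin 3}
    (hi : (v,i) ∈ S) : (v,j) ∈ S := by
  by_contra hj
  have c0 := col_zero_eq A v
  have c1 := col_one_eq A v
  have c2 := col_two_eq A v
  fin_cases i <;> fin_cases j
  · exact hj hi
  · exact key_split hinf hnz c1 c0 hi hj
  · exact key_split hinf hnz c2 (c0.trans (add_comm _ _)) hi hj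
  · exact key_split hinf hnz c0 c1 hi hj
  · exact hj hi
  · exact key_split hinf hnz (c2.trans (add_comm _ _)) (c1.trans (add_comm _ _)) hi hj
  · exact key_split hinf hnz (c0.trans (add_comm _ _)) c2 hi hj
  · exact key_split hinf hnz (c1.trans (add_comm _ _)) (c2.trans (add_comm _ _)) hi hj
  · exact hj hi

lemma core_lemma (hA : A.IsSymm) (hc : (toSimpleGraph A).Connected)
    (h2 : 1 < Fintype.card V) (hl : iasLambda A S = 0) :
    S = ∅ ∨ S = Set.univ := by
  classical
  have hinf := (lambda_zero_iff A S).mp hl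
  have hnz := cols_ne_zero hA hc h2
  set X : Set V := {u | ((u, 0) : V × Fin 3) ∈ S} with hX
  have hS : S = tauSet X := by
    ext ⟨u, i⟩
    constructor
    · intro h; exact unsplit hinf hnz h
    · intro h; exact unsplit hinf hnz (h : ((u,0) : V × Fin 3) ∈ S)
  by_cases hXe : X = ∅
  · left; rw [hS, hXe]; ext ⟨u,i⟩; simp [tauSet]
  by_cases hXu : X = Set.univ
  · right; rw [hS, hXu]; ext ⟨u,i⟩; simp [tauSet]
  -- crossing edge
  obtain ⟨x, hx, y, hy, hadj⟩ := walk_cross (X := X)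
    (Classical.choice (hc.preconnected (Set.nonempty_iff_ne_empty.mpr hXe).choose
      ((Set.ne_univ_iff_exists_notMem X).mp hXu).choose))
    (Set.nonempty_iff_ne_empty.mpr hXe).choose_spec
    ((Set.ne_univ_iff_exists_notMem X).mp hXu).choose_spec
  -- f = χ(x), g = part of f outside X
  set f : V → ZMod 2 := iasCol A (x, 1) with hf
  set g : V → ZMod 2 := fun u => if u ∈ X then 0 else f u with hg
  have hfS : f ∈ Submodule.span (ZMod 2) (iasCol A '' S) :=
    Submodule.subset_span ⟨(x,1), by rw [hS]; exact hx, rfl⟩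
  have hgSc : g ∈ Submodule.span (ZMod 2) (iasCol A '' Sᶜ) := by
    apply mem_span_of_supp A g (Y := Xᶜ)
    · intro w hw
      have : w ∈ X := not_not.mp hw
      simp [hg, this]
    · intro w hw
      rw [hS, tauSet_compl]
      exact hw
  have hfgS : f + g ∈ Submodule.span (ZMod 2) (iasCol A '' S) := by
    apply mem_span_of_supp A (f + g) (Y := X)
    · intro w hw
      have : g w = f w := by simp [hg, hw]
      rw [Pi.add_apply, this]
      generalize f w = a
      revert a; decide
    · intro w hw
      rw [hS]; exact hw
  have hgS : g ∈ Submodule.span (ZMod 2) (iasCol A '' S) := by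
    have : g = f + (f + g) := by
      funext u
      simp only [Pi.add_apply]
      generalize f u = a
      generalize g u = b
      revert a b; decide
    rw [this]
    exact add_mem hfS hfgS
  have hg0 : g = 0 := (Submodule.mem_bot _).mp (hinf ▸ Submodule.mem_inf.mpr ⟨hgS, hgSc⟩)
  have : g y = 1 := by
    have hAyx : A y x = 1 := ((hA.apply y x).symm.trans hadj.2.1)
    simp [hg, hy, hf, iasCol, hAyx]
  rw [hg0] at this
  simp at this

end Core

section BadCases

variable {A : Matrix V V (ZMod 2)}

lemma span_tauSet_le_suppSub (hA : A.IsSymm) {X : Set V}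
    (hcross : ∀ x ∈ X, ∀ y ∉ X, A x y = 0) :
    Submodule.span (ZMod 2) (iasCol A '' tauSet X) ≤ suppSub X := by
  rw [Submodule.span_le]
  rintro _ ⟨⟨v, i⟩, hv, rfl⟩ w hw
  have hv' : v ∈ X := hv
  have hwv : w ≠ v := by rintro rfl; exact hw hv'
  have h1 : A w v = 0 := (hA.apply v w).trans (hcross v hv' w hw)
  fin_cases i <;> simp [iasCol, hwv, h1]

lemma span_tauSet_compl_le_suppSub {X : Set V}
    (hcross : ∀ x ∈ X, ∀ y ∉ X, A x y = 0) :
    Submodule.span (ZMod 2) (iasCol A '' tauSet Xᶜ) ≤ suppSub Xᶜ := by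
  rw [Submodule.span_le]
  rintro _ ⟨⟨v, i⟩, hv, rfl⟩ w hw
  have hv' : v ∉ X := hv
  have hw' : w ∈ X := not_not.mp hw
  have hwv : w ≠ v := by rintro rfl; exact hv' hw'
  have h1 : A w v = 0 := hcross w hw' v hv'
  fin_cases i <;> simp [iasCol, hwv, h1]

lemma lambda_tauSet_zero (hA : A.IsSymm) {X : Set V}
    (hcross : ∀ x ∈ X, ∀ y ∉ X, A x y = 0) :
    iasLambda A (tauSet X) = 0 := by
  rw [lambda_zero_iff]
  apply le_bot_iff.mp
  calc Submodule.span (ZMod 2) (iasCol A '' tauSet X) ⊓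
        Submodule.span (ZMod 2) (iasCol A '' (tauSet X)ᶜ)
      ≤ suppSub X ⊓ suppSub Xᶜ :=
        inf_le_inf (span_tauSet_le_suppSub hA hcross)
          (by rw [tauSet_compl]; exact span_tauSet_compl_le_suppSub hcross)
    _ = ⊥ := suppSub_inf X

lemma one_le_rank_of_mem {S : Set (V × Fin 3)} {p : V × Fin 3} (hp : p ∈ S)
    (hnz : iasCol A p ≠ 0) : 1 ≤ iasRank A S := by
  rw [Nat.one_le_iff_ne_zero]
  intro h0
  unfold iasRank at h0
  rw [Submodule.finrank_eq_zero] at h0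
  have hmem : iasCol A p ∈ Submodule.span (ZMod 2) (iasCol A '' S) :=
    Submodule.subset_span ⟨p, hp, rfl⟩
  rw [h0] at hmem
  exact hnz ((Submodule.mem_bot _).mp hmem)

lemma bad_disconnected (hA : A.IsSymm) [Nonempty V]
    (hnc : ¬ (toSimpleGraph A).Connected) :
    ∃ S, OrdinarySep A 1 S ∧ CyclicSep A 1 S ∧ VerticalSep A 1 S := by
  classical
  obtain ⟨v, w, hvw⟩ : ∃ v w, ¬ (toSimpleGraph A).Reachable v w := by
    by_contra h
    push_neg at h
    exact hnc ((SimpleGraph.connected_iff _).mpr ⟨h, ‹Nonempty V›⟩)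
  set X : Set V := {u | (toSimpleGraph A).Reachable v u} with hXdef
  have hvX : v ∈ X := SimpleGraph.Reachable.refl v
  have hwX : w ∉ X := hvw
  have hcross : ∀ x ∈ X, ∀ y ∉ X, A x y = 0 := by
    intro x hx y hy
    rcases zmod2_cases (A x y) with h | h
    · exact h
    · exfalso
      have hxy : x ≠ y := by rintro rfl; exact hy hx
      have hadj : (toSimpleGraph A).Adj x y :=
        (show x ≠ y ∧ A x y = 1 ∧ A y x = 1 from ⟨hxy, h, (hA.apply x y).trans h⟩)
      have hx' : (toSimpleGraph A).Reachable v x := hx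
      exact hy (hx'.trans hadj.reachable)
  set S : Set (V × Fin 3) := tauSet X with hSdef
  have hlam : iasLambda A S = 0 := lambda_tauSet_zero hA hcross
  have hlam1 : iasLambda A S < 1 := by rw [hlam]; exact zero_lt_one
  have memS : ∀ i : Fin 3, (v, i) ∈ S := fun _ => hvX
  have memSc : ∀ i : Fin 3, (w, i) ∈ Sᶜ := fun _ => hwX
  refine ⟨S, ⟨one_pos, hlam1, ?_, ?_⟩,
    ⟨one_pos, hlam1, dep_of_triple A (memS 0) (memS 1) (memS 2),
      dep_of_triple A (memSc 0) (memSc 1) (memSc 2)⟩,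
    ⟨one_pos, hlam1, one_le_rank_of_mem (memS 0) (col0_ne_zero A v),
      one_le_rank_of_mem (memSc 0) (col0_ne_zero A w)⟩⟩
  · exact (Set.ncard_pos (Set.toFinite _)).mpr ⟨(v, 0), memS 0⟩
  · exact (Set.ncard_pos (Set.toFinite _)).mpr ⟨(w, 0), memSc 0⟩

lemma bad_card_one (h1 : Fintype.card V = 1) (A : Matrix V V (ZMod 2)) :
    ∃ S, OrdinarySep A 1 S ∧ CyclicSep A 1 S := by
  classical
  obtain ⟨v, hv⟩ := Fintype.card_eq_one_iff.mp h1
  set j : Fin 3 := if A v v = 0 then 1 else 2 with hj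
  set j' : Fin 3 := if A v v = 0 then 2 else 1 with hj'
  have hz : iasCol A (v, j) = 0 := by
    funext w
    rw [hv w]
    by_cases h : A v v = 0
    · simp [hj, h, iasCol]
    · have h1' : A v v = 1 := (zmod2_cases _).resolve_left h
      simp [hj, h, iasCol, h1']
      decide
  have hj0 : j ≠ 0 := by by_cases h : A v v = 0 <;> simp [hj, h]
  have hj'0 : j' ≠ 0 := by by_cases h : A v v = 0 <;> simp [hj', h]
  have hj'j : j' ≠ j := by by_cases h : A v v = 0 <;> simp [hj, hj', h]
  have hcol' : iasCol A (v, j') = iasCol A (v, 0) := by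
    funext w
    rw [hv w]
    by_cases h : A v v = 0
    · simp [hj', h, iasCol]
    · have h1' : A v v = 1 := (zmod2_cases _).resolve_left h
      simp [hj', h, iasCol, h1']
  set S : Set (V × Fin 3) := {(v, j)} with hSdef
  have hm0 : ((v, 0) : V × Fin 3) ∈ Sᶜ := by
    simp only [hSdef, Set.mem_compl_iff, Set.mem_singleton_iff, Prod.mk.injEq]
    rintro ⟨-, h⟩
    exact hj0 h.symm
  have hmj' : ((v, j') : V × Fin 3) ∈ Sᶜ := by
    simp only [hSdef, Set.mem_compl_iff, Set.mem_singleton_iff, Prod.mk.injEq]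
    rintro ⟨-, h⟩
    exact hj'j h
  have hrS : iasRank A S = 0 := by
    unfold iasRank
    rw [hSdef, Set.image_singleton, hz, Submodule.span_zero_singleton, finrank_bot]
  have hlam : iasLambda A S = 0 := by
    unfold iasLambda
    rw [hrS, Nat.zero_add]
    apply Nat.sub_eq_zero_of_le
    unfold iasRank
    exact Submodule.finrank_mono
      (Submodule.span_mono (Set.image_mono (Set.subset_univ _)))
  have hlam1 : iasLambda A S < 1 := by rw [hlam]; exact zero_lt_one
  refine ⟨S, ⟨one_pos, hlam1, ?_, ?_⟩, ⟨one_pos, hlam1, ?_, ?_⟩⟩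
  · rw [hSdef, Set.ncard_singleton]
  · exact (Set.ncard_pos (Set.toFinite _)).mpr ⟨(v, 0), hm0⟩
  · intro li
    have li' : LinearIndependent (ZMod 2) (fun s : S => iasCol A s.1) := li
    exact li'.ne_zero ⟨(v, j), rfl⟩ hz
  · intro li
    have li' : LinearIndependent (ZMod 2) (fun s : ↥Sᶜ => iasCol A s.1) := li
    have heq := li'.injective (a₁ := ⟨(v, j'), hmj'⟩) (a₂ := ⟨(v, 0), hm0⟩) hcol'
    have : j' = 0 := congrArg (fun p => (p : V × Fin 3).2) (Subtype.ext_iff.mp heq)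
    exact hj'0 this

end BadCases

theorem stmt0 (A : Matrix V V (ZMod 2)) (hA : A.IsSymm) (hn : 1 ≤ Fintype.card V) :
    List.TFAE [2 ≤ iasTau A, 2 ≤ iasKappaStar A, 2 ≤ iasKappa A,
      (toSimpleGraph A).Connected ∧ 1 < Fintype.card V] := by
  classical
  have hne : Nonempty V := Fintype.card_pos_iff.mp hn
  have hcase : ¬((toSimpleGraph A).Connected ∧ 1 < Fintype.card V) →
      Fintype.card V = 1 ∨ ¬(toSimpleGraph A).Connected := by
    intro h
    by_cases hc : (toSimpleGraph A).Connected
    · left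
      have : ¬(1 < Fintype.card V) := fun h2 => h ⟨hc, h2⟩
      omega
    · right; exact hc
  have h41 : ((toSimpleGraph A).Connected ∧ 1 < Fintype.card V) → 2 ≤ iasTau A := by
    rintro ⟨hc, h2⟩
    apply le_sInf
    rintro b ⟨m, rfl, S, hS⟩
    rcases Nat.lt_or_ge m 2 with hm | hm
    · exfalso
      have hm1 : m = 1 := by have := hS.1; omega
      subst hm1
      have hl0 : iasLambda A S = 0 := Nat.lt_one_iff.mp hS.2.1
      rcases core_lemma hA hc h2 hl0 with rfl | rfl
      · have := hS.2.2.1; simp at this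
      · have := hS.2.2.2; simp at this
    · exact_mod_cast hm
  have h14 : 2 ≤ iasTau A → ((toSimpleGraph A).Connected ∧ 1 < Fintype.card V) := by
    intro h
    by_contra hP
    obtain ⟨S, hS⟩ : ∃ S, OrdinarySep A 1 S := by
      rcases hcase hP with h1 | hnc
      · obtain ⟨S, hS, -⟩ := bad_card_one h1 A; exact ⟨S, hS⟩
      · obtain ⟨S, hS, -, -⟩ := bad_disconnected hA hnc; exact ⟨S, hS⟩
    have hle : iasTau A ≤ ((1 : ℕ) : ℕ∞) := sInf_le ⟨1, rfl, S, hS⟩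
    have h21 := le_trans h hle
    norm_num at h21
  have h42 : ((toSimpleGraph A).Connected ∧ 1 < Fintype.card V) → 2 ≤ iasKappaStar A := by
    rintro ⟨hc, h2⟩
    apply le_csInf ⟨3 * Fintype.card V - iasRank A Set.univ, Or.inr rfl⟩
    rintro b (⟨S, hS⟩ | hb)
    · rcases Nat.lt_or_ge b 2 with hm | hm
      · exfalso
        have hb1 : b = 1 := by have := hS.1; omega
        subst hb1
        have hl0 : iasLambda A S = 0 := Nat.lt_one_iff.mp hS.2.1
        rcases core_lemma hA hc h2 hl0 with rfl | rfl
        · exact hS.2.2.1 (indep_empty A)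
        · have hd := hS.2.2.2
          rw [Set.compl_univ] at hd
          exact hd (indep_empty A)
      · exact hm
    · rw [Set.mem_singleton_iff] at hb
      subst hb
      rw [rank_univ]
      omega
  have h24 : 2 ≤ iasKappaStar A → ((toSimpleGraph A).Connected ∧ 1 < Fintype.card V) := by
    intro h
    by_contra hP
    obtain ⟨S, hS⟩ : ∃ S, CyclicSep A 1 S := by
      rcases hcase hP with h1 | hnc
      · obtain ⟨S, -, hS⟩ := bad_card_one h1 A; exact ⟨S, hS⟩
      · obtain ⟨S, -, hS, -⟩ := bad_disconnected hA hnc; exact ⟨S, hS⟩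
    have hle : iasKappaStar A ≤ 1 := Nat.sInf_le (Set.mem_union_left _ ⟨S, hS⟩)
    omega
  have h43 : ((toSimpleGraph A).Connected ∧ 1 < Fintype.card V) → 2 ≤ iasKappa A := by
    rintro ⟨hc, h2⟩
    apply le_csInf ⟨iasRank A Set.univ, Or.inr rfl⟩
    rintro b (⟨S, hS⟩ | hb)
    · rcases Nat.lt_or_ge b 2 with hm | hm
      · exfalso
        have hb1 : b = 1 := by have := hS.1; omega
        subst hb1
        have hl0 : iasLambda A S = 0 := Nat.lt_one_iff.mp hS.2.1
        rcases core_lemma hA hc h2 hl0 with rfl | rfl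
        · have := hS.2.2.1; rw [rank_empty] at this; omega
        · have := hS.2.2.2; rw [Set.compl_univ, rank_empty] at this; omega
      · exact hm
    · rw [Set.mem_singleton_iff] at hb
      subst hb
      rw [rank_univ]
      omega
  have h34 : 2 ≤ iasKappa A → ((toSimpleGraph A).Connected ∧ 1 < Fintype.card V) := by
    intro h
    by_contra hP
    rcases hcase hP with h1 | hnc
    · have hle : iasKappa A ≤ iasRank A Set.univ :=
        Nat.sInf_le (Set.mem_union_right _ rfl)
      rw [rank_univ, h1] at hle
      omega
    · obtain ⟨S, -, -, hS⟩ := bad_disconnected hA hnc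
      have hle : iasKappa A ≤ 1 := Nat.sInf_le (Set.mem_union_left _ ⟨S, hS⟩)
      omega
  tfae_have 1 → 4 := h14
  tfae_have 4 → 1 := h41
  tfae_have 2 → 4 := h24
  tfae_have 4 → 2 := h42
  tfae_have 3 → 4 := h34
  tfae_have 4 → 3 := h43
  tfae_finish
end

section
/- Let G be a graph, M = M[IAS(G)], and X ⊆ V. Then c_G(X) < min{|X|, |V−X|} if and only if there is a k ≥ 1 such that τ_G(X) is a vertical k-separation of M. Moreover, if this is the case, then the smallest k for which τ_G(X) is a vertical k-separation of M is k = 2·c_G(X) + 1. -/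
open scoped ENat

variable {V : Type*} [Fintype V] [DecidableEq V]

section StmtFourAux

open Matrix

variable {V : Type*} [Fintype V] [DecidableEq V]

private lemma span_tau_eq (A : Matrix V V (ZMod 2)) (X : Set V) :
    Submodule.span (ZMod 2) (iasCol A '' tauSet X) =
    Submodule.span (ZMod 2)
      ((fun v => (Pi.single v 1 : V → ZMod 2)) '' X ∪ (fun v => fun w => A w v) '' X) := by
  apply le_antisymm <;> rw [Submodule.span_le]
  · rintro _ ⟨⟨v, i⟩, hv, rfl⟩
    have hv : v ∈ X := hv
    have he : (Pi.single v 1 : V → ZMod 2) ∈ Submodule.span (ZMod 2)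
        ((fun v => (Pi.single v 1 : V → ZMod 2)) '' X ∪ (fun v => fun w => A w v) '' X) :=
      Submodule.subset_span (Set.mem_union_left _ ⟨v, hv, rfl⟩)
    have ha : (fun w => A w v) ∈ Submodule.span (ZMod 2)
        ((fun v => (Pi.single v 1 : V → ZMod 2)) '' X ∪ (fun v => fun w => A w v) '' X) :=
      Submodule.subset_span (Set.mem_union_right _ ⟨v, hv, rfl⟩)
    fin_cases i
    · have : iasCol A (v, 0) = (Pi.single v 1 : V → ZMod 2) := by
        funext w; simp [iasCol, Pi.single_apply]
      simpa [this] using he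
    · have : iasCol A (v, 1) = fun w => A w v := by
        funext w; simp [iasCol]
      simpa [this] using ha
    · have : iasCol A (v, 2) = (fun w => A w v) + (Pi.single v 1 : V → ZMod 2) := by
        funext w; simp [iasCol, Pi.single_apply]
      simpa [this] using Submodule.add_mem _ ha he
  · rintro _ (⟨v, hv, rfl⟩ | ⟨v, hv, rfl⟩)
    · refine Submodule.subset_span ⟨(v, 0), hv, ?_⟩
      funext w; simp [iasCol, Pi.single_apply]
    · refine Submodule.subset_span ⟨(v, 1), hv, ?_⟩
      funext w; simp [iasCol]

private lemma ker_funLeft_eq (X : Set V) :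
    LinearMap.ker (LinearMap.funLeft (ZMod 2) (ZMod 2) (Subtype.val : ↥(Xᶜ) → V)) =
    Submodule.span (ZMod 2) ((fun v => (Pi.single v 1 : V → ZMod 2)) '' X) := by
  classical
  apply le_antisymm
  · intro g hg
    have hg' : ∀ w : V, w ∉ X → g w = 0 := by
      intro w hw
      have := congrFun (LinearMap.mem_ker.mp hg) ⟨w, hw⟩
      simpa [LinearMap.funLeft] using this
    have hsum : g = ∑ v : V, Pi.single v (g v) := (Finset.univ_sum_single g).symm
    rw [hsum]
    refine Submodule.sum_mem _ fun v _ => ?_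
    by_cases hv : v ∈ X
    · have h1 : Pi.single v (g v) = g v • (Pi.single v 1 : V → ZMod 2) := by
        funext w
        by_cases h : w = v <;> simp [Pi.single_apply, h]
      rw [h1]
      exact Submodule.smul_mem _ _ (Submodule.subset_span ⟨v, hv, rfl⟩)
    · rw [hg' v hv]
      simp
  · rw [Submodule.span_le]
    rintro _ ⟨v, hv, rfl⟩
    simp only [SetLike.mem_coe, LinearMap.mem_ker]
    funext w
    have : (w : V) ≠ v := fun h => w.2 (h ▸ hv)
    simp [LinearMap.funLeft, Pi.single_eq_of_ne this]

private lemma finrank_span_singles (X : Set V) :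
    Module.finrank (ZMod 2)
      (Submodule.span (ZMod 2) ((fun v => (Pi.single v 1 : V → ZMod 2)) '' X)) = X.ncard := by
  classical
  haveI := Fintype.ofFinite ↥X
  have hli : LinearIndependent (ZMod 2) (fun v : X => (Pi.single (v : V) 1 : V → ZMod 2)) := by
    have h2 := (Pi.basisFun (ZMod 2) V).linearIndependent.comp
      (Subtype.val : X → V) Subtype.val_injective
    simpa [Function.comp_def, Pi.basisFun_apply] using h2
  rw [Set.image_eq_range]
  rw [finrank_span_eq_card hli]
  rw [← Nat.card_eq_fintype_card, Nat.card_coe_set_eq]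

set_option synthInstance.maxHeartbeats 800000 in
private lemma iasRank_tau (A : Matrix V V (ZMod 2)) (X : Set V) :
    iasRank A (tauSet X) = X.ncard + cutRank A X := by
  classical
  set P := LinearMap.funLeft (ZMod 2) (ZMod 2) (Subtype.val : ↥(Xᶜ) → V) with hP
  set E : Set (V → ZMod 2) := (fun v => (Pi.single v 1 : V → ZMod 2)) '' X with hE
  set C : Set (V → ZMod 2) := (fun v => fun w => A w v) '' X with hC
  set W : Submodule (ZMod 2) (V → ZMod 2) := Submodule.span (ZMod 2) (E ∪ C) with hW
  have hspan : iasRank A (tauSet X) = Module.finrank (ZMod 2) W := by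
    rw [iasRank, span_tau_eq]
  have hrn := LinearMap.finrank_range_add_finrank_ker (P.comp W.subtype)
  have hkerP : LinearMap.ker P = Submodule.span (ZMod 2) E := ker_funLeft_eq X
  have hrange : LinearMap.range (P.comp W.subtype) =
      Submodule.span (ZMod 2) ((fun x : V => fun w : ↥(Xᶜ) => A w.1 x) '' X) := by
    rw [LinearMap.range_comp, Submodule.range_subtype]
    show Submodule.map P W = _
    rw [hW, Submodule.map_span, Set.image_union]
    have hCimg : P '' C = (fun x : V => fun w : ↥(Xᶜ) => A w.1 x) '' X := by
      rw [hC, Set.image_image]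
      rfl
    have hEimg : ∀ x ∈ P '' E, x = 0 := by
      rintro _ ⟨g, hg, rfl⟩
      have : g ∈ LinearMap.ker P := hkerP ▸ Submodule.subset_span hg
      exact this
    rw [hCimg]
    apply le_antisymm
    · rw [Submodule.span_le]
      rintro x (hx | hx)
      · rw [hEimg x hx]; exact Submodule.zero_mem _
      · exact Submodule.subset_span hx
    · exact Submodule.span_mono Set.subset_union_right
  have hkerle : LinearMap.ker P ≤ W := by
    rw [hkerP]
    exact Submodule.span_mono Set.subset_union_left
  have hkerrank : Module.finrank (ZMod 2) (LinearMap.ker (P.comp W.subtype)) = X.ncard := by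
    have hke : Module.finrank (ZMod 2) ↥(Submodule.comap W.subtype (LinearMap.ker P)) =
        Module.finrank (ZMod 2) ↥(LinearMap.ker P) :=
      (Submodule.comapSubtypeEquivOfLe hkerle).finrank_eq
    rw [LinearMap.ker_comp, hke, hkerP]
    exact finrank_span_singles X
  rw [hspan, ← hrn, hrange, hkerrank, cutRank, Nat.add_comm]

private lemma iasRank_univ' (A : Matrix V V (ZMod 2)) :
    iasRank A (Set.univ : Set (V × Fin 3)) = Fintype.card V := by
  have htop : Submodule.span (ZMod 2) (iasCol A '' Set.univ) = ⊤ := by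
    rw [eq_top_iff, ← (Pi.basisFun (ZMod 2) V).span_eq]
    apply Submodule.span_mono
    rintro _ ⟨v, rfl⟩
    refine ⟨(v, 0), trivial, ?_⟩
    funext w
    simp [iasCol, Pi.basisFun_apply, Pi.single_apply]
  rw [iasRank, htop, finrank_top, Module.finrank_fintype_fun_eq_card]

private lemma rank_submatrix_row {m m' n : Type*} [Fintype m] [Fintype m'] [Fintype n]
    (M : Matrix m n (ZMod 2)) (e : m' ≃ m) :
    (M.submatrix e id).rank = M.rank := by
  rw [Matrix.rank_eq_finrank_span_cols, Matrix.rank_eq_finrank_span_cols]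
  have himg : Set.range (M.submatrix e id).col =
      Set.image (LinearEquiv.funCongrLeft (ZMod 2) (ZMod 2) e) (Set.range M.col) := by
    ext f
    constructor
    · rintro ⟨j, rfl⟩; exact ⟨Mᵀ j, ⟨j, rfl⟩, rfl⟩
    · rintro ⟨g, ⟨j, rfl⟩, rfl⟩; exact ⟨j, rfl⟩
  rw [himg, ← LinearEquiv.coe_coe, Submodule.span_image]
  exact LinearEquiv.finrank_map_eq _ _

private lemma cutRank_eq_rank (A : Matrix V V (ZMod 2)) (X : Set V)
    [Fintype ↥X] [Fintype ↥(Xᶜ)] :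
    cutRank A X = Matrix.rank (Matrix.of fun (w : ↥(Xᶜ)) (x : ↥X) => A w.1 x.1) := by
  rw [Matrix.rank_eq_finrank_span_cols, cutRank]
  have h : ((fun x : V => fun w : ↥(Xᶜ) => A w.1 x) '' X) =
      Set.range ((Matrix.of fun (w : ↥(Xᶜ)) (x : ↥X) => A w.1 x.1)ᵀ) := by
    rw [Set.image_eq_range]
    rfl
  rw [h]
  rfl

private lemma cutRank_le_ncard (A : Matrix V V (ZMod 2)) (X : Set V) :
    cutRank A X ≤ X.ncard := by
  classical
  haveI := Fintype.ofFinite ↥X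
  haveI := Fintype.ofFinite ↥(Xᶜ)
  rw [cutRank_eq_rank A X]
  calc Matrix.rank _ ≤ Fintype.card ↥X := Matrix.rank_le_card_width _
  _ = X.ncard := by rw [← Nat.card_eq_fintype_card, Nat.card_coe_set_eq]

private lemma cutRank_le_ncard_compl (A : Matrix V V (ZMod 2)) (X : Set V) :
    cutRank A X ≤ Xᶜ.ncard := by
  classical
  haveI := Fintype.ofFinite ↥X
  haveI := Fintype.ofFinite ↥(Xᶜ)
  rw [cutRank_eq_rank A X]
  calc Matrix.rank _ ≤ Fintype.card ↥(Xᶜ) := Matrix.rank_le_card_height _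
  _ = Xᶜ.ncard := by rw [← Nat.card_eq_fintype_card, Nat.card_coe_set_eq]

private lemma cutRank_compl (A : Matrix V V (ZMod 2)) (hA : A.IsSymm) (X : Set V) :
    cutRank A Xᶜ = cutRank A X := by
  classical
  haveI := Fintype.ofFinite ↥X
  haveI := Fintype.ofFinite ↥(Xᶜ)
  haveI := Fintype.ofFinite ↥(Xᶜᶜ)
  rw [cutRank_eq_rank A X, cutRank_eq_rank A Xᶜ]
  set M : Matrix ↥(Xᶜ) ↥X (ZMod 2) := Matrix.of fun (w : ↥(Xᶜ)) (x : ↥X) => A w.1 x.1 with hM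
  let e : ↥(Xᶜᶜ) ≃ ↥X := Equiv.setCongr (compl_compl X)
  have hsym : ∀ a b : V, A a b = A b a := fun a b =>
    (congrFun (congrFun hA a) b).symm.trans (Matrix.transpose_apply A a b)
  have hMM : (Matrix.of fun (w : ↥(Xᶜᶜ)) (x : ↥(Xᶜ)) => A w.1 x.1) = (Mᵀ).submatrix e id := by
    ext w x
    simp only [Matrix.submatrix_apply, Matrix.transpose_apply, Matrix.of_apply, id_eq, hM]
    have hew : ((e w : ↥X) : V) = (w : V) := rfl
    rw [hew]
    exact hsym w.1 x.1
  rw [hMM, rank_submatrix_row, Matrix.rank_transpose]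

end StmtFourAux

theorem stmt4 (A : Matrix V V (ZMod 2)) (hA : A.IsSymm) (X : Set V) :
    (cutRank A X < min X.ncard Xᶜ.ncard ↔
      ∃ k : ℕ, 1 ≤ k ∧ VerticalSep A k (tauSet X)) ∧
    (cutRank A X < min X.ncard Xᶜ.ncard →
      IsLeast {k : ℕ | VerticalSep A k (tauSet X)} (2 * cutRank A X + 1)) := by
  classical
  have h1 : iasRank A (tauSet X) = X.ncard + cutRank A X := iasRank_tau A X
  have hcompl : (tauSet X)ᶜ = tauSet Xᶜ := rfl
  have h2 : iasRank A ((tauSet X)ᶜ) = Xᶜ.ncard + cutRank A X := by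
    rw [hcompl, iasRank_tau, cutRank_compl A hA]
  have huniv : iasRank A (Set.univ : Set (V × Fin 3)) = Fintype.card V := iasRank_univ' A
  have hcard : X.ncard + Xᶜ.ncard = Fintype.card V := by
    rw [← Nat.card_eq_fintype_card]
    exact Set.ncard_add_ncard_compl X
  have hl : iasLambda A (tauSet X) = 2 * cutRank A X := by
    rw [iasLambda, h1, h2, huniv]
    omega
  have hb1 : cutRank A X ≤ X.ncard := cutRank_le_ncard A X
  have hb2 : cutRank A X ≤ Xᶜ.ncard := cutRank_le_ncard_compl A X
  have hVS : ∀ k : ℕ, VerticalSep A k (tauSet X) ↔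
      (0 < k ∧ 2 * cutRank A X < k ∧ k ≤ X.ncard + cutRank A X ∧ k ≤ Xᶜ.ncard + cutRank A X) := by
    intro k
    rw [VerticalSep, hl, h1, h2]
  constructor
  · constructor
    · intro h
      rw [lt_min_iff] at h
      exact ⟨2 * cutRank A X + 1, by omega,
        (hVS _).mpr ⟨by omega, by omega, by omega, by omega⟩⟩
    · rintro ⟨k, hk1, hk2⟩
      rw [hVS] at hk2
      rw [lt_min_iff]
      omega
  · intro h
    rw [lt_min_iff] at h
    constructor
    · exact (hVS _).mpr ⟨by omega, by omega, by omega, by omega⟩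
    · intro k hk
      rw [Set.mem_setOf_eq, hVS] at hk
      omega
end
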